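/- Orthogonality identity: let ψ solve the Grad–Shafranov problem on D with vortex core Ω = {ψ − r² − γ > 0} and set Ψ = ψ − r² − γ. Then ∫_Ω ∇Ψ · ∇(r² + γ) r⁻¹ dz dr = 0, and consequently ∫_Ω |∇Ψ|² r⁻¹ = ∫_Ω |∇ψ|² r⁻¹ − ∫_Ω |∇(r²+γ)|² r⁻¹. -/

import Mathlib

open Real MeasureTheory

noncomputable section

/-- `∂_z` of a function of `(z,r)`. -/
def pz2 (f : ℝ × ℝ → ℝ) (x : ℝ × ℝ) : ℝ := fderiv ℝ f x (1, 0)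

/-- `∂_r` of a function of `(z,r)`. -/
def pr2 (f : ℝ × ℝ → ℝ) (x : ℝ × ℝ) : ℝ := fderiv ℝ f x (0, 1)

/-- `|∇ψ|²` for a function of `(z,r)`. -/
def gradsq (f : ℝ × ℝ → ℝ) (x : ℝ × ℝ) : ℝ := pz2 f x ^ 2 + pr2 f x ^ 2

/-- The half disk `D = {(z,r) : r > 0, z² + r² < R²}`. -/
def halfDisk (R : ℝ) : Set (ℝ × ℝ) := {x | 0 < x.2 ∧ x.1 ^ 2 + x.2 ^ 2 < R ^ 2}


lemma hasFDerivAt_sq_snd (x : ℝ × ℝ) :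
    HasFDerivAt (fun y : ℝ × ℝ => y.2 ^ 2)
      ((2 * x.2) • ContinuousLinearMap.snd ℝ ℝ ℝ) x := by
  have h := (hasDerivAt_pow 2 x.2).comp_hasFDerivAt x (hasFDerivAt_snd (𝕜 := ℝ) (p := x))
  simpa [Function.comp_def] using h

def phiN (n : ℕ) (t : ℝ) : ℝ := min (max (n*t) 0) 1
def GN (n : ℕ) (t : ℝ) : ℝ := ∫ s in (0:ℝ)..t, phiN n s

lemma phiN_cont (n : ℕ) : Continuous (phiN n) := by unfold phiN; fun_prop
lemma phiN_nonneg (n : ℕ) (t : ℝ) : 0 ≤ phiN n t := le_min (le_max_right _ _) zero_le_one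
lemma phiN_le_one (n : ℕ) (t : ℝ) : phiN n t ≤ 1 := min_le_right _ _
lemma phiN_of_nonpos (n : ℕ) {t : ℝ} (ht : t ≤ 0) : phiN n t = 0 := by
  unfold phiN
  rw [max_eq_right (mul_nonpos_of_nonneg_of_nonpos (Nat.cast_nonneg n) ht)]
  exact min_eq_left zero_le_one
lemma phiN_of_one_le (n : ℕ) {t : ℝ} (ht : 1 ≤ (n:ℝ)*t) : phiN n t = 1 := by
  unfold phiN
  rw [max_eq_left (le_trans zero_le_one ht)]
  exact min_eq_right ht
lemma GN_hasDerivAt (n : ℕ) (t : ℝ) : HasDerivAt (GN n) (phiN n t) t :=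
  intervalIntegral.integral_hasDerivAt_right
    ((phiN_cont n).intervalIntegrable _ _)
    ((phiN_cont n).stronglyMeasurableAtFilter _ _)
    (phiN_cont n).continuousAt
lemma GN_of_nonpos (n : ℕ) {t : ℝ} (ht : t ≤ 0) : GN n t = 0 := by
  unfold GN
  rw [intervalIntegral.integral_symm]
  have h : ∫ s in t..(0:ℝ), phiN n s = 0 := by
    rw [intervalIntegral.integral_congr (g := fun _ => 0)]
    · simp
    · intro s hs
      rw [Set.uIcc_of_le ht] at hs
      exact phiN_of_nonpos n hs.2
  rw [h]; ring

lemma isOpen_halfDisk (R : ℝ) : IsOpen (halfDisk R) := by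
  apply IsOpen.inter
  · exact isOpen_lt continuous_const continuous_snd
  · exact isOpen_lt (Continuous.add (continuous_fst.pow 2) (continuous_snd.pow 2)) continuous_const

lemma halfDisk_subset_Icc (R : ℝ) (hR : 0 < R) :
    halfDisk R ⊆ Set.Icc ((-R, -R) : ℝ × ℝ) (R, R) := by
  rintro ⟨z, r⟩ ⟨h1, h2⟩
  simp only [Set.mem_Icc, Prod.le_def]
  refine ⟨⟨?_, ?_⟩, ?_, ?_⟩ <;> nlinarith [sq_nonneg (z + R), sq_nonneg (z - R), sq_nonneg (r - R)]

lemma mem_frontier_halfDisk {R z : ℝ} (hz : z^2 < R^2) {r : ℝ}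
    (hr : 0 ≤ r) (hrb : r ≤ Real.sqrt (R^2 - z^2))
    (hnot : (z, r) ∉ halfDisk R) : (z, r) ∈ frontier (halfDisk R) := by
  set b := Real.sqrt (R^2 - z^2) with hb
  have hbpos : 0 < b := Real.sqrt_pos.2 (by linarith)
  have hbsq : b^2 = R^2 - z^2 := Real.sq_sqrt (by linarith)
  have hsub : ({z} ×ˢ Set.Ioo 0 b : Set (ℝ × ℝ)) ⊆ halfDisk R := by
    rintro ⟨z', r'⟩ ⟨hz', hr'⟩
    simp only [Set.mem_singleton_iff] at hz'
    subst hz'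
    exact ⟨hr'.1, by nlinarith [hr'.1, hr'.2]⟩
  have hcl : (z, r) ∈ closure (halfDisk R) := by
    apply closure_mono hsub
    rw [closure_prod_eq, closure_singleton, closure_Ioo hbpos.ne]
    exact ⟨rfl, hr, hrb⟩
  rw [frontier, (isOpen_halfDisk R).interior_eq]
  exact ⟨hcl, hnot⟩

lemma key_orth (R gam : ℝ) (hR : 0 < R) (hgam : 0 < gam) (ψ : ℝ × ℝ → ℝ)
    (hψ : ContDiff ℝ 2 ψ) (hbd : ∀ x ∈ frontier (halfDisk R), ψ x = 0) :
    ∫ x in {x ∈ halfDisk R | 0 < ψ x - x.2 ^ 2 - gam}, (pr2 ψ x - 2 * x.2) = 0 := by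
  set P : ℝ × ℝ → ℝ := fun x => pr2 ψ x - 2 * x.2 with hP
  set Ψ : ℝ × ℝ → ℝ := fun x => ψ x - x.2 ^ 2 - gam with hΨ
  have hψdiff : Differentiable ℝ ψ := hψ.differentiable (by norm_num)
  have hψcont : Continuous ψ := hψ.continuous
  have hPcont : Continuous P := by
    have h : Continuous (fderiv ℝ ψ) := hψ.continuous_fderiv (by norm_num)
    exact (h.clm_apply continuous_const).sub (by fun_prop)
  have hΨcont : Continuous Ψ := by
    apply hψcont.sub (by fun_prop) |>.sub continuous_const
  have hDopen := isOpen_halfDisk R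
  have hDmeas := hDopen.measurableSet
  set Ω : Set (ℝ × ℝ) := {x ∈ halfDisk R | 0 < Ψ x} with hΩdef
  have hΩopen : IsOpen Ω := hDopen.inter (isOpen_lt continuous_const hΨcont)
  have hΩmeas := hΩopen.measurableSet
  -- the slice derivative
  have hline : ∀ z r : ℝ, HasDerivAt (fun r : ℝ => Ψ (z, r)) (P (z, r)) r := by
    intro z r
    have hψx : HasFDerivAt ψ (fderiv ℝ ψ (z, r)) (z, r) := (hψdiff _).hasFDerivAt
    have hl : HasDerivAt (fun r : ℝ => ((z, r) : ℝ × ℝ)) (0, 1) r :=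
      (hasDerivAt_const r z).prodMk (hasDerivAt_id r)
    have h1 : HasDerivAt (fun r : ℝ => ψ (z, r)) (pr2 ψ (z, r)) r :=
      hψx.comp_hasDerivAt r hl
    have h2 : HasDerivAt (fun r : ℝ => r ^ 2) (2 * r) r := by
      simpa using hasDerivAt_pow 2 r
    simpa [hΨ, hP] using (h1.sub h2).sub_const gam
  -- integrability of P on the half disk
  have hPint : IntegrableOn P (halfDisk R) := by
    refine (hPcont.continuousOn.integrableOn_compact isCompact_Icc).mono_set
      (halfDisk_subset_Icc R hR)
  -- Claim A : for each n the regularized integral vanishes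
  have hA : ∀ n : ℕ, (∫ x in halfDisk R, phiN n (Ψ x) * P x) = 0 := by
    intro n
    set F : ℝ × ℝ → ℝ := fun x => phiN n (Ψ x) * P x with hF
    have hFcont : Continuous F := ((phiN_cont n).comp hΨcont).mul hPcont
    have hFint : Integrable ((halfDisk R).indicator F) := by
      rw [integrable_indicator_iff hDmeas]
      exact (hFcont.continuousOn.integrableOn_compact isCompact_Icc).mono_set
        (halfDisk_subset_Icc R hR)
    rw [← integral_indicator hDmeas]
    rw [show (volume : Measure (ℝ × ℝ)) = (volume : Measure ℝ).prod volume from Measure.volume_eq_prod _ _]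
    rw [MeasureTheory.integral_prod _ (by rwa [← Measure.volume_eq_prod _ _])]
    have hinner : ∀ z : ℝ, (∫ r : ℝ, (halfDisk R).indicator F (z, r)) = 0 := by
      intro z
      by_cases hz : z ^ 2 < R ^ 2
      · set b := Real.sqrt (R ^ 2 - z ^ 2) with hb
        have hbpos : 0 < b := Real.sqrt_pos.2 (by linarith)
        have hbsq : b ^ 2 = R ^ 2 - z ^ 2 := Real.sq_sqrt (by linarith)
        have hslice : ∀ r : ℝ, (halfDisk R).indicator F (z, r)
            = (Set.Ioo 0 b).indicator (fun r => F (z, r)) r := by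
          intro r
          classical
          rw [Set.indicator_apply, Set.indicator_apply]
          congr 1
          simp only [halfDisk, Set.mem_setOf_eq, Set.mem_Ioo, eq_iff_iff]
          constructor
          · rintro ⟨h1, h2⟩
            refine ⟨h1, ?_⟩
            rw [hb]
            nlinarith [Real.sq_sqrt (show (0:ℝ) ≤ R^2 - z^2 by linarith),
              Real.sqrt_nonneg (R^2 - z^2)]
          · rintro ⟨h1, h2⟩
            exact ⟨h1, by nlinarith⟩
        rw [show (fun r : ℝ => (halfDisk R).indicator F (z, r))
            = (Set.Ioo 0 b).indicator (fun r => F (z, r)) from funext hslice]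
        rw [integral_indicator measurableSet_Ioo, ← integral_Ioc_eq_integral_Ioo,
          ← intervalIntegral.integral_of_le hbpos.le]
        have hftc : ∫ r in (0:ℝ)..b, F (z, r)
            = GN n (Ψ (z, b)) - GN n (Ψ (z, 0)) := by
          refine intervalIntegral.integral_eq_sub_of_hasDerivAt
            (f := fun r => GN n (Ψ (z, r))) (fun r _ => ?_) ?_
          · exact (GN_hasDerivAt n (Ψ (z, r))).comp r (hline z r)
          · exact (hFcont.comp (by fun_prop : Continuous fun r : ℝ => ((z, r) : ℝ × ℝ))).intervalIntegrable _ _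
        rw [hftc]
        have hψb : ψ (z, b) = 0 := by
          apply hbd
          apply mem_frontier_halfDisk hz hbpos.le le_rfl
          simp only [halfDisk, Set.mem_setOf_eq, not_and, not_lt]
          intro _; nlinarith
        have hψ0 : ψ (z, 0) = 0 := by
          apply hbd
          apply mem_frontier_halfDisk hz le_rfl (Real.sqrt_nonneg _)
          simp [halfDisk]
        have h1 : Ψ (z, b) ≤ 0 := by
          have he : Ψ (z, b) = ψ (z, b) - b ^ 2 - gam := rfl
          rw [he, hψb]; nlinarith
        have h2 : Ψ (z, 0) ≤ 0 := by
          have he : Ψ (z, 0) = ψ (z, 0) - 0 ^ 2 - gam := rfl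
          rw [he, hψ0]; nlinarith
        rw [GN_of_nonpos n h1, GN_of_nonpos n h2, sub_zero]
      · have hz' : ∀ r : ℝ, (halfDisk R).indicator F (z, r) = 0 := by
          intro r
          apply Set.indicator_of_notMem
          simp only [halfDisk, Set.mem_setOf_eq, not_and, not_lt]
          intro hr; nlinarith
        simp [hz']
    exact (integral_congr_ae (Filter.Eventually.of_forall hinner)).trans (by simp)
  -- dominated convergence
  have hbound : Integrable ((halfDisk R).indicator fun x => |P x|) := by
    rw [integrable_indicator_iff hDmeas]
    exact ((hPcont.abs).continuousOn.integrableOn_compact isCompact_Icc).mono_set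
      (halfDisk_subset_Icc R hR)
  have hDCT : Filter.Tendsto
      (fun n : ℕ => ∫ x, (halfDisk R).indicator (fun x => phiN n (Ψ x) * P x) x)
      Filter.atTop (nhds (∫ x, Ω.indicator P x)) := by
    apply MeasureTheory.tendsto_integral_of_dominated_convergence
      ((halfDisk R).indicator fun x => |P x|)
    · intro n
      exact ((((phiN_cont n).comp hΨcont).mul hPcont).stronglyMeasurable.indicator
        hDmeas).aestronglyMeasurable
    · exact hbound
    · intro n
      filter_upwards with x
      by_cases hx : x ∈ halfDisk R
      · rw [Set.indicator_of_mem hx, Set.indicator_of_mem hx]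
        rw [Real.norm_eq_abs, abs_mul]
        calc |phiN n (Ψ x)| * |P x| ≤ 1 * |P x| := by
              apply mul_le_mul_of_nonneg_right _ (abs_nonneg _)
              rw [abs_of_nonneg (phiN_nonneg n _)]
              exact phiN_le_one n _
          _ = |P x| := one_mul _
      · rw [Set.indicator_of_notMem hx, Set.indicator_of_notMem hx]
        simp
    · filter_upwards with x
      by_cases hx : x ∈ halfDisk R
      · by_cases hΨx : 0 < Ψ x
        · rw [Set.indicator_of_mem (show x ∈ Ω from ⟨hx, hΨx⟩)]
          apply Filter.Tendsto.congr' _ tendsto_const_nhds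
          filter_upwards [Filter.eventually_ge_atTop ⌈(Ψ x)⁻¹⌉₊] with n hn
          have h1 : 1 ≤ (n : ℝ) * Ψ x := by
            have h2 : (Ψ x)⁻¹ ≤ (n : ℝ) := le_trans (Nat.le_ceil _) (Nat.cast_le.2 hn)
            rw [← inv_mul_cancel₀ hΨx.ne']
            exact mul_le_mul_of_nonneg_right h2 hΨx.le
          rw [Set.indicator_of_mem hx, phiN_of_one_le n h1, one_mul]
        · have hne : x ∉ Ω := fun h => hΨx h.2
          rw [Set.indicator_of_notMem hne]
          have : ∀ n : ℕ, (halfDisk R).indicator (fun x => phiN n (Ψ x) * P x) x = 0 := by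
            intro n
            rw [Set.indicator_of_mem hx, phiN_of_nonpos n (not_lt.1 hΨx), zero_mul]
          simp only [this]
          exact tendsto_const_nhds
      · have hne : x ∉ Ω := fun h => hx h.1
        rw [Set.indicator_of_notMem hne]
        simp only [Set.indicator_of_notMem hx]
        exact tendsto_const_nhds
  have heq : ∀ n : ℕ, (∫ x, (halfDisk R).indicator (fun x => phiN n (Ψ x) * P x) x) = 0 := by
    intro n
    rw [integral_indicator hDmeas]
    exact hA n
  simp only [heq] at hDCT
  have hzero : (∫ x, Ω.indicator P x) = 0 :=
    tendsto_nhds_unique hDCT tendsto_const_nhds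
  rw [← integral_indicator hΩmeas]
  exact hzero

/-- The Grad–Shafranov operator `L = ∂_z² + ∂_r² - r⁻¹ ∂_r`. -/
def GSop (Ψ : ℝ × ℝ → ℝ) (x : ℝ × ℝ) : ℝ :=
  pz2 (pz2 Ψ) x + pr2 (pr2 Ψ) x - pr2 Ψ x / x.2

/-- Orthogonality identity: for a solution `ψ` of the Grad–Shafranov problem on `D` with
vortex core `Ω = {ψ - r² - γ > 0}` and `Ψ = ψ - r² - γ`, one has
`∫_Ω ∇Ψ·∇(r²+γ) r⁻¹ = 0`, hence
`∫_Ω |∇Ψ|² r⁻¹ = ∫_Ω |∇ψ|² r⁻¹ - ∫_Ω |∇(r²+γ)|² r⁻¹`. -/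
theorem stmt19 (R q lam gam : ℝ) (hR : 0 < R) (hq : 1 < q) (hlam : 0 < lam)
    (hgam : 0 < gam) (ψ : ℝ × ℝ → ℝ) (hψ : ContDiff ℝ 2 ψ)
    (hpde : ∀ x ∈ halfDisk R,
      -(GSop ψ x) = lam * (max (ψ x - x.2 ^ 2 - gam) 0) ^ (2 * q - 1))
    (hbd : ∀ x ∈ frontier (halfDisk R), ψ x = 0)
    (hfin : IntegrableOn (fun x => gradsq ψ x / x.2) (halfDisk R)) :
    (∫ x in {x ∈ halfDisk R | 0 < ψ x - x.2 ^ 2 - gam},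
        (pz2 (fun x : ℝ × ℝ => ψ x - x.2 ^ 2 - gam) x
            * pz2 (fun x : ℝ × ℝ => x.2 ^ 2 + gam) x
          + pr2 (fun x : ℝ × ℝ => ψ x - x.2 ^ 2 - gam) x
            * pr2 (fun x : ℝ × ℝ => x.2 ^ 2 + gam) x) / x.2) = 0 ∧
    (∫ x in {x ∈ halfDisk R | 0 < ψ x - x.2 ^ 2 - gam},
        gradsq (fun x : ℝ × ℝ => ψ x - x.2 ^ 2 - gam) x / x.2)
      = (∫ x in {x ∈ halfDisk R | 0 < ψ x - x.2 ^ 2 - gam}, gradsq ψ x / x.2)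
        - ∫ x in {x ∈ halfDisk R | 0 < ψ x - x.2 ^ 2 - gam},
            gradsq (fun x : ℝ × ℝ => x.2 ^ 2 + gam) x / x.2 := by
  set Ω : Set (ℝ × ℝ) := {x ∈ halfDisk R | 0 < ψ x - x.2 ^ 2 - gam} with hΩdef
  have hψdiff : Differentiable ℝ ψ := hψ.differentiable (by norm_num)
  have hΩopen : IsOpen Ω := by
    exact (isOpen_halfDisk R).inter (isOpen_lt continuous_const
      ((hψ.continuous.sub (Continuous.pow continuous_snd 2)).sub continuous_const))
  have hΩmeas : MeasurableSet Ω := hΩopen.measurableSet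
  have hΩsub : Ω ⊆ halfDisk R := fun x hx => hx.1
  -- derivative computations
  have hpz : ∀ x : ℝ × ℝ, pz2 (fun x : ℝ × ℝ => ψ x - x.2 ^ 2 - gam) x = pz2 ψ x := by
    intro x
    have hψx : HasFDerivAt ψ (fderiv ℝ ψ x) x := (hψdiff x).hasFDerivAt
    have h : HasFDerivAt (fun x : ℝ × ℝ => ψ x - x.2 ^ 2 - gam)
        (fderiv ℝ ψ x - (2 * x.2) • ContinuousLinearMap.snd ℝ ℝ ℝ) x :=
      (hψx.sub (hasFDerivAt_sq_snd x)).sub_const gam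
    rw [pz2, pz2, h.fderiv]; simp
  have hpr : ∀ x : ℝ × ℝ, pr2 (fun x : ℝ × ℝ => ψ x - x.2 ^ 2 - gam) x
      = pr2 ψ x - 2 * x.2 := by
    intro x
    have hψx : HasFDerivAt ψ (fderiv ℝ ψ x) x := (hψdiff x).hasFDerivAt
    have h : HasFDerivAt (fun x : ℝ × ℝ => ψ x - x.2 ^ 2 - gam)
        (fderiv ℝ ψ x - (2 * x.2) • ContinuousLinearMap.snd ℝ ℝ ℝ) x :=
      (hψx.sub (hasFDerivAt_sq_snd x)).sub_const gam
    rw [pr2, pr2, h.fderiv]; simp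
  have hgz : ∀ x : ℝ × ℝ, pz2 (fun x : ℝ × ℝ => x.2 ^ 2 + gam) x = 0 := by
    intro x
    have h : HasFDerivAt (fun x : ℝ × ℝ => x.2 ^ 2 + gam)
        ((2 * x.2) • ContinuousLinearMap.snd ℝ ℝ ℝ) x := (hasFDerivAt_sq_snd x).add_const gam
    rw [pz2, h.fderiv]; simp
  have hgr : ∀ x : ℝ × ℝ, pr2 (fun x : ℝ × ℝ => x.2 ^ 2 + gam) x = 2 * x.2 := by
    intro x
    have h : HasFDerivAt (fun x : ℝ × ℝ => x.2 ^ 2 + gam)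
        ((2 * x.2) • ContinuousLinearMap.snd ℝ ℝ ℝ) x := (hasFDerivAt_sq_snd x).add_const gam
    rw [pr2, h.fderiv]; simp
  have hkey : (∫ x in Ω, (pr2 ψ x - 2 * x.2)) = 0 := key_orth R gam hR hgam ψ hψ hbd
  -- first conjunct
  have hc1 : (∫ x in Ω,
      (pz2 (fun x : ℝ × ℝ => ψ x - x.2 ^ 2 - gam) x
          * pz2 (fun x : ℝ × ℝ => x.2 ^ 2 + gam) x
        + pr2 (fun x : ℝ × ℝ => ψ x - x.2 ^ 2 - gam) x
          * pr2 (fun x : ℝ × ℝ => x.2 ^ 2 + gam) x) / x.2) = 0 := by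
    have hcongr : (∫ x in Ω,
        (pz2 (fun x : ℝ × ℝ => ψ x - x.2 ^ 2 - gam) x
            * pz2 (fun x : ℝ × ℝ => x.2 ^ 2 + gam) x
          + pr2 (fun x : ℝ × ℝ => ψ x - x.2 ^ 2 - gam) x
            * pr2 (fun x : ℝ × ℝ => x.2 ^ 2 + gam) x) / x.2)
        = ∫ x in Ω, 2 * (pr2 ψ x - 2 * x.2) := by
      apply setIntegral_congr_fun hΩmeas
      intro x hx
      have hx2 : x.2 ≠ 0 := hx.1.1.ne'
      simp only [hpz, hpr, hgz, hgr]
      field_simp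
      ring
    have hmul : (∫ x in Ω, 2 * (pr2 ψ x - 2 * x.2))
        = 2 * ∫ x in Ω, (pr2 ψ x - 2 * x.2) := integral_const_mul 2 _
    rw [hcongr, hmul, hkey, mul_zero]
  refine ⟨hc1, ?_⟩
  -- integrability facts
  have hprcont : Continuous (pr2 ψ) := by
    have h : Continuous (fderiv ℝ ψ) := hψ.continuous_fderiv (by norm_num)
    exact h.clm_apply continuous_const
  have hΩIcc : Ω ⊆ Set.Icc ((-R, -R) : ℝ × ℝ) (R, R) :=
    fun x hx => halfDisk_subset_Icc R hR (hΩsub hx)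
  have hint1 : IntegrableOn (fun x : ℝ × ℝ => gradsq ψ x / x.2) Ω := hfin.mono_set hΩsub
  have hint2 : IntegrableOn (fun x : ℝ × ℝ => 4 * x.2) Ω :=
    (((continuous_const.mul continuous_snd).continuousOn.integrableOn_compact
      isCompact_Icc).mono_set hΩIcc)
  have hint3 : IntegrableOn (fun x : ℝ × ℝ => 4 * (pr2 ψ x - 2 * x.2)) Ω :=
    (((continuous_const.mul (hprcont.sub (continuous_const.mul
      continuous_snd))).continuousOn.integrableOn_compact isCompact_Icc).mono_set hΩIcc)
  -- rewrite the left side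
  have hlhs : (∫ x in Ω, gradsq (fun x : ℝ × ℝ => ψ x - x.2 ^ 2 - gam) x / x.2)
      = ∫ x in Ω, (gradsq ψ x / x.2 - 4 * x.2 - 4 * (pr2 ψ x - 2 * x.2)) := by
    apply setIntegral_congr_fun hΩmeas
    intro x hx
    have hx2 : x.2 ≠ 0 := hx.1.1.ne'
    simp only [gradsq, hpz, hpr]
    field_simp
    ring
  have hrhs : (∫ x in Ω, gradsq (fun x : ℝ × ℝ => x.2 ^ 2 + gam) x / x.2)
      = ∫ x in Ω, 4 * x.2 := by
    apply setIntegral_congr_fun hΩmeas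
    intro x hx
    have hx2 : x.2 ≠ 0 := hx.1.1.ne'
    simp only [gradsq, hgz, hgr]
    field_simp
    ring
  have hs1 : (∫ x in Ω, (gradsq ψ x / x.2 - 4 * x.2 - 4 * (pr2 ψ x - 2 * x.2)))
      = (∫ x in Ω, (gradsq ψ x / x.2 - 4 * x.2)) - ∫ x in Ω, 4 * (pr2 ψ x - 2 * x.2) :=
    integral_sub (hint1.sub hint2) hint3
  have hs2 : (∫ x in Ω, (gradsq ψ x / x.2 - 4 * x.2))
      = (∫ x in Ω, gradsq ψ x / x.2) - ∫ x in Ω, 4 * x.2 := integral_sub hint1 hint2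
  have hmul2 : (∫ x in Ω, 4 * (pr2 ψ x - 2 * x.2))
      = 4 * ∫ x in Ω, (pr2 ψ x - 2 * x.2) := integral_const_mul 4 _
  rw [hlhs, hrhs, hs1, hs2, hmul2, hkey, mul_zero, sub_zero]


end
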